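/- Let f : [n] → P([n]) be a function such that its image, when the values are listed without repetition and together with [n], forms a strictly increasing chain S₀ ⊊ S₁ ⊊ ⋯ ⊊ S_k = [n] of k+1 distinct sets (so the rank of f is k, the number of distinct values of f other than [n]). Let M(f) be the n×n 0-1 matrix with M(f)_{i,j} = 1 iff j ∈ f(i), and let J be the all-ones n×n matrix. Then the rank (over the rationals) of the matrix J − M(f) equals k. -/

import Mathlib

open Classical in
theorem rank_J_sub_M {n k : ℕ} (f : Fin n → Set (Fin n))
    (S : Fin (k + 1) → Set (Fin n)) (hmono : StrictMono S)
    (hlast : S (Fin.last k) = Set.univ)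
    (hrange : Set.range f ∪ {Set.univ} = Set.range S) :
    (Matrix.of fun i j : Fin n => if j ∈ f i then (0 : ℚ) else 1).rank = k := by
  set A : Matrix (Fin n) (Fin n) ℚ :=
    Matrix.of fun i j : Fin n => if j ∈ f i then (0 : ℚ) else 1 with hA
  -- the candidate basis vectors
  set v : Fin k → (Fin n → ℚ) :=
    fun j x => if x ∈ S j.castSucc then 0 else 1 with hv
  -- pick witnesses x j ∈ S j.succ \ S j.castSucc
  have hsep : ∀ j : Fin k, ∃ x : Fin n, x ∈ S j.succ ∧ x ∉ S j.castSucc := by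
    intro j
    have h : S j.castSucc ⊂ S j.succ := hmono (Fin.castSucc_lt_succ : j.castSucc < j.succ)
    rcases Set.exists_of_ssubset h with ⟨x, hx1, hx2⟩
    exact ⟨x, hx1, hx2⟩
  choose x hx1 hx2 using hsep
  -- evaluation of v i at x j
  have hev : ∀ i j : Fin k, v i (x j) = if i ≤ j then 1 else 0 := by
    intro i j
    simp only [hv]
    by_cases hij : i ≤ j
    · have hxn : x j ∉ S i.castSucc := fun hmem =>
        hx2 j (hmono.le_iff_le.mpr (by simpa using hij) hmem)
      simp [hxn, hij]
    · push_neg at hij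
      have : x j ∈ S i.castSucc := by
        have hle : (j.succ : Fin (k+1)) ≤ i.castSucc := by
          have : (j : ℕ) + 1 ≤ (i : ℕ) := hij
          simpa [Fin.le_def] using this
        exact hmono.le_iff_le.mpr hle (hx1 j)
      simp [this, not_le.mpr hij]
  -- linear independence of v
  have hli : LinearIndependent ℚ v := by
    rw [linearIndependent_iff']
    intro s a hsum
    -- extend to full sum
    have hsum' : ∀ j : Fin k, ∑ i ∈ s, a i * v i (x j) = 0 := by
      intro j
      have := congrFun hsum (x j)
      simpa [Finset.sum_apply] using this
    have key : ∀ j : Fin k, ∑ i ∈ s.filter (· ≤ j), a i = 0 := by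
      intro j
      have := hsum' j
      rw [← this]
      rw [Finset.sum_filter]
      apply Finset.sum_congr rfl
      intro i _
      rw [hev]
      by_cases h : i ≤ j <;> simp [h]
    have main : ∀ m : ℕ, ∀ i : Fin k, (i : ℕ) < m → i ∈ s → a i = 0 := by
      intro m
      induction m with
      | zero => intro i hi _; omega
      | succ m ihm =>
      intro i hi his
      have ih : ∀ l : Fin k, l < i → l ∈ s → a l = 0 := by
        intro l hl hls
        exact ihm l (by omega) hls
      have h1 : ∑ l ∈ s.filter (· ≤ i), a l = 0 := key i
      have h2 : s.filter (· ≤ i) = insert i (s.filter (· < i)) := by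
        ext t
        simp only [Finset.mem_filter, Finset.mem_insert]
        constructor
        · rintro ⟨ht, hle⟩
          rcases lt_or_eq_of_le hle with hlt | heq
          · exact Or.inr ⟨ht, hlt⟩
          · exact Or.inl heq
        · rintro (rfl | ⟨ht, hlt⟩)
          · exact ⟨his, le_refl _⟩
          · exact ⟨ht, le_of_lt hlt⟩
      have h3 : ∑ l ∈ s.filter (· < i), a l = 0 := by
        apply Finset.sum_eq_zero
        intro l hl
        simp only [Finset.mem_filter] at hl
        exact ih l hl.2 hl.1
      rw [h2, Finset.sum_insert (by simp), h3, add_zero] at h1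
      exact h1
    intro i his
    exact main ((i : ℕ) + 1) i (Nat.lt_succ_self _) his
  -- rows of A
  have hrowspan : Submodule.span ℚ (Set.range A) = Submodule.span ℚ (Set.range v) := by
    apply le_antisymm
    · rw [Submodule.span_le]
      rintro _ ⟨i, rfl⟩
      have : f i ∈ Set.range S := by
        rw [← hrange]; exact Or.inl ⟨i, rfl⟩
      obtain ⟨j, hj⟩ := this
      by_cases hjl : j = Fin.last k
      · have : A i = 0 := by
          funext y
          have : y ∈ f i := by rw [← hj, hjl, hlast]; trivial
          simp [hA, this]
        rw [this]; exact Submodule.zero_mem _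
      · obtain ⟨j', rfl⟩ := Fin.exists_castSucc_eq.2 hjl
        have : A i = v j' := by
          funext y
          simp only [hA, hv, Matrix.of_apply, ← hj]
        rw [this]
        exact Submodule.subset_span ⟨j', rfl⟩
    · rw [Submodule.span_le]
      rintro _ ⟨j, rfl⟩
      have hne : S j.castSucc ≠ Set.univ := by
        intro h
        have := hmono (Fin.castSucc_lt_last j)
        rw [h, hlast] at this
        exact absurd this (lt_irrefl _)
      have : S j.castSucc ∈ Set.range f := by
        have : S j.castSucc ∈ Set.range f ∪ {Set.univ} := by
          rw [hrange]; exact ⟨j.castSucc, rfl⟩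
        rcases this with h | h
        · exact h
        · exact absurd h hne
      obtain ⟨i, hi⟩ := this
      have : v j = A i := by
        funext y
        simp only [hA, hv, Matrix.of_apply, ← hi]
      rw [this]
      exact Submodule.subset_span ⟨i, rfl⟩
  rw [Matrix.rank_eq_finrank_span_row]
  change Module.finrank ℚ (Submodule.span ℚ (Set.range A)) = k
  rw [hrowspan, finrank_span_eq_card hli, Fintype.card_fin]
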